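/- Let A be an m×n real matrix. There exist y ∈ ℝ^m and x ∈ ℝ^n such that yᵀA ≥ 0ᵀ, x ≥ 0, Ax = 0, and xᵀ + yᵀA > 0ᵀ (i.e., for every j, x_j + (yᵀA)_j > 0). -/

import Mathlib

open Finset

variable {E : Type*} [NormedAddCommGroup E] [InnerProductSpace ℝ E] [FiniteDimensional ℝ E]
variable {ι : Type*} [Fintype ι] [DecidableEq ι]

/-- nonneg combinations supported on a finset -/
def coneOn (v : ι → E) (s : Finset ι) : Set E :=
  {x | ∃ c : ι → ℝ, (∀ i, 0 ≤ c i) ∧ (∀ i ∉ s, c i = 0) ∧ x = ∑ i, c i • v i}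

lemma cara (v : ι → E) (s : Finset ι) :
    ∀ x ∈ coneOn v s, ∃ t : Finset ι,
      (LinearIndependent ℝ (fun i : t => v i)) ∧ x ∈ coneOn v t := by
  induction s using Finset.strongInduction with
  | _ s ih =>
    intro x hx
    by_cases hli : LinearIndependent ℝ (fun i : s => v i)
    · exact ⟨s, hli, hx⟩
    · obtain ⟨c, hc0, hcs, rfl⟩ := hx
      rw [Fintype.linearIndependent_iff] at hli
      push_neg at hli
      obtain ⟨g, hg0, i₁, hgi⟩ := hli
      -- extend g to ι by zero
      set d : ι → ℝ := fun i => if h : i ∈ s then g ⟨i, h⟩ else 0 with hd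
      have hds : ∀ i ∉ s, d i = 0 := fun i hi => by simp [hd, hi]
      have hdsum : ∑ i, d i • v i = 0 := by
        rw [← Finset.sum_subset (Finset.subset_univ s)
          (fun i _ hi => by rw [hds i hi, zero_smul])]
        rw [← Finset.sum_coe_sort s (fun i => d i • v i)]
        rw [← hg0]
        exact Finset.sum_congr rfl (fun i _ => by simp [hd, i.2])
      have hdne : ∃ i, d i ≠ 0 := ⟨i₁, by simpa [hd, i₁.2] using hgi⟩
      -- wlog some coordinate of d is positive
      obtain ⟨d, hds, hdsum, i₂, hd2⟩ :
          ∃ d : ι → ℝ, (∀ i ∉ s, d i = 0) ∧ (∑ i, d i • v i = 0) ∧ ∃ i, 0 < d i := by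
        obtain ⟨i₀, hi₀⟩ := hdne
        rcases lt_or_gt_of_ne hi₀ with h | h
        · exact ⟨-d, fun i hi => by simp [hds i hi], by
            simpa [neg_smul] using congrArg Neg.neg hdsum, i₀, by simpa using h⟩
        · exact ⟨d, hds, hdsum, i₀, h⟩
      have hi₂s : i₂ ∈ s := by by_contra h; rw [hds i₂ h] at hd2; exact lt_irrefl 0 hd2
      -- minimize ratio
      have hTne : (s.filter (fun i => 0 < d i)).Nonempty :=
        ⟨i₂, Finset.mem_filter.mpr ⟨hi₂s, hd2⟩⟩
      obtain ⟨i₀, hi₀T, hi₀min⟩ := Finset.exists_min_image _ (fun i => c i / d i) hTne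
      rw [Finset.mem_filter] at hi₀T
      obtain ⟨hi₀s, hdi₀⟩ := hi₀T
      set t : ℝ := c i₀ / d i₀ with ht
      have ht0 : 0 ≤ t := div_nonneg (hc0 i₀) hdi₀.le
      set c' : ι → ℝ := fun i => c i - t * d i with hc'
      have hc'0 : ∀ i, 0 ≤ c' i := by
        intro i
        rcases le_or_gt (d i) 0 with h | h
        · have : t * d i ≤ 0 := mul_nonpos_of_nonneg_of_nonpos ht0 h
          simp only [hc']; linarith [hc0 i]
        · have his : i ∈ s := by
            by_contra hns; rw [hds i hns] at h; exact lt_irrefl 0 h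
          have := hi₀min i (Finset.mem_filter.mpr ⟨his, h⟩)
          rw [div_le_div_iff₀ hdi₀ h] at this
          have : t * d i ≤ c i := by
            rw [ht, div_mul_eq_mul_div, div_le_iff₀ hdi₀]; linarith
          simp only [hc']; linarith
      have hc'i₀ : c' i₀ = 0 := by simp [hc', ht]; field_simp; ring
      have hsum' : ∑ i, c' i • v i = ∑ i, c i • v i := by
        simp only [hc', sub_smul, Finset.sum_sub_distrib, mul_smul]
        rw [← Finset.smul_sum, hdsum, smul_zero, sub_zero]
      have hx' : (∑ i, c i • v i) ∈ coneOn v (s.erase i₀) := by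
        refine ⟨c', hc'0, ?_, hsum'.symm⟩
        intro i hi
        rcases Decidable.em (i = i₀) with rfl | hne
        · exact hc'i₀
        · have : i ∉ s := fun his => hi (Finset.mem_erase.mpr ⟨hne, his⟩)
          simp [hc', hcs i this, hds i this]
      exact ih _ (Finset.erase_ssubset hi₀s) _ hx'

lemma isClosed_coneOn (v : ι → E) (t : Finset ι)
    (hli : LinearIndependent ℝ (fun i : t => v i)) : IsClosed (coneOn v t) := by
  set L : (t → ℝ) →ₗ[ℝ] E := Fintype.linearCombination ℝ (fun i : t => v i) with hL
  have hLapp : ∀ μ : t → ℝ, L μ = ∑ i : t, μ i • v i := by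
    intro μ; simp [hL, Fintype.linearCombination_apply]
  have himg : coneOn v t = L '' {μ : t → ℝ | ∀ i, 0 ≤ μ i} := by
    ext x
    constructor
    · rintro ⟨c, hc0, hcs, rfl⟩
      refine ⟨fun i => c i, fun i => hc0 i, ?_⟩
      rw [hLapp, Finset.sum_coe_sort t (fun i => c i • v i)]
      exact Finset.sum_subset (Finset.subset_univ t)
        (fun i _ hi => by rw [hcs i hi, zero_smul])
    · rintro ⟨μ, hμ, rfl⟩
      have hμ' : ∀ i, 0 ≤ μ i := hμ
      refine ⟨fun i => if h : i ∈ t then μ ⟨i, h⟩ else 0, ?_, ?_, ?_⟩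
      · intro i; by_cases h : i ∈ t
        · simpa [h] using hμ' ⟨i, h⟩
        · simp [h]
      · intro i hi; simp [hi]
      · rw [hLapp, ← Finset.sum_subset (Finset.subset_univ t)
          (fun i _ hi => by simp [hi]), ← Finset.sum_coe_sort t]
        exact Finset.sum_congr rfl (fun i _ => by simp [i.2])
  rw [himg]
  have hker : LinearMap.ker L = ⊥ := by
    rw [LinearMap.ker_eq_bot']
    intro μ hμ
    rw [hLapp] at hμ
    funext i
    exact Fintype.linearIndependent_iff.mp hli μ hμ i
  have hce := LinearMap.isClosedEmbedding_of_injective (f := L) hker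
  apply hce.isClosedMap
  have : {μ : t → ℝ | ∀ i, 0 ≤ μ i} = ⋂ i, {μ : t → ℝ | 0 ≤ μ i} := by
    ext μ; simp [Set.mem_iInter]
  rw [this]
  exact isClosed_iInter fun i => isClosed_le continuous_const (continuous_apply i)

lemma isClosed_coneSet (v : ι → E) :
    IsClosed {x : E | ∃ c : ι → ℝ, (∀ i, 0 ≤ c i) ∧ x = ∑ i, c i • v i} := by
  have heq : {x : E | ∃ c : ι → ℝ, (∀ i, 0 ≤ c i) ∧ x = ∑ i, c i • v i} =
      ⋃ t : Finset ι, ⋃ (_ : LinearIndependent ℝ (fun i : t => v i)), coneOn v t := by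
    ext x
    simp only [Set.mem_iUnion, Set.mem_setOf_eq]
    constructor
    · rintro ⟨c, hc0, rfl⟩
      obtain ⟨t, hli, hx⟩ := cara v Finset.univ _ ⟨c, hc0, fun i hi => absurd (Finset.mem_univ i) hi, rfl⟩
      exact ⟨t, hli, hx⟩
    · rintro ⟨t, _, c, hc0, _, rfl⟩
      exact ⟨c, hc0, rfl⟩
  rw [heq]
  exact isClosed_iUnion_of_finite fun t =>
    isClosed_iUnion_of_finite fun hli => isClosed_coneOn v t hli

open scoped InnerProductSpace in
lemma cone_alternative (v : ι → E) (b : E) :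
    (∃ c : ι → ℝ, (∀ i, 0 ≤ c i) ∧ b = ∑ i, c i • v i) ∨
    (∃ u : E, (∀ i, 0 ≤ ⟪v i, u⟫_ℝ) ∧ ⟪u, b⟫_ℝ < 0) := by
  haveI : CompleteSpace E := FiniteDimensional.complete ℝ E
  set K : ConvexCone ℝ E :=
    { carrier := {x : E | ∃ c : ι → ℝ, (∀ i, 0 ≤ c i) ∧ x = ∑ i, c i • v i}
      smul_mem' := by
        rintro r hr x ⟨c, hc0, rfl⟩
        exact ⟨fun i => r * c i, fun i => mul_nonneg hr.le (hc0 i), by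
          rw [Finset.smul_sum]; exact Finset.sum_congr rfl fun i _ => (mul_smul r (c i) (v i)).symm⟩
      add_mem' := by
        rintro x ⟨c, hc0, rfl⟩ y ⟨d, hd0, rfl⟩
        exact ⟨fun i => c i + d i, fun i => add_nonneg (hc0 i) (hd0 i), by
          rw [← Finset.sum_add_distrib]
          exact Finset.sum_congr rfl fun i _ => (add_smul (c i) (d i) (v i)).symm⟩ } with hK
  by_cases hb : b ∈ K
  · exact Or.inl hb
  · right
    have hne : (K : Set E).Nonempty := ⟨0, ⟨fun _ => 0, fun i => le_refl 0, by simp⟩⟩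
    have hcl : IsClosed (K : Set E) := isClosed_coneSet v
    obtain ⟨u, hu1, hu2⟩ : ∃ u : E, (∀ x ∈ K, 0 ≤ ⟪x, u⟫_ℝ) ∧ ⟪u, b⟫_ℝ < 0 := by
      have h0 : (0 : E) ∈ K := ⟨fun _ => 0, fun i => le_refl 0, by simp⟩
      let P : ProperCone ℝ E :=
        { carrier := (K : Set E)
          add_mem' := fun ha hb => K.add_mem ha hb
          zero_mem' := h0
          smul_mem' := fun c x hx => by
            rcases eq_or_ne c 0 with rfl | hc
            · simpa using h0
            · exact K.smul_mem (NNReal.coe_pos.mpr (pos_iff_ne_zero.mpr hc)) hx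
          isClosed' := hcl }
      obtain ⟨y, hy1, hy2⟩ := ProperCone.hyperplane_separation' P (x₀ := b) (by exact hb)
      exact ⟨y, hy1, by rw [real_inner_comm]; exact hy2⟩
    refine ⟨u, fun i => ?_, hu2⟩
    apply hu1
    exact ⟨fun i' => if i' = i then 1 else 0, fun i' => by positivity, by simp⟩

open scoped InnerProductSpace in
lemma tucker_col (m n : ℕ) (A : Matrix (Fin m) (Fin n) ℝ) (j : Fin n) :
    (∃ y : Fin m → ℝ, 0 ≤ A.vecMul y ∧ 0 < A.vecMul y j) ∨
    (∃ x : Fin n → ℝ, 0 ≤ x ∧ A.mulVec x = 0 ∧ 0 < x j) := by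
  classical
  have hinner : ∀ w z : EuclideanSpace ℝ (Fin n), ⟪w, z⟫_ℝ = ∑ k, w k * z k := fun w z => by
    simp [PiLp.inner_apply, RCLike.inner_apply, conj_trivial]
    exact Finset.sum_congr rfl fun _ _ => mul_comm _ _
  set v : ((Fin m ⊕ Fin m) ⊕ Fin n) → EuclideanSpace ℝ (Fin n) :=
    fun i => match i with
    | .inl (.inl i) => WithLp.toLp 2 (fun k => A i k : Fin n → ℝ)
    | .inl (.inr i) => WithLp.toLp 2 (fun k => -A i k : Fin n → ℝ)
    | .inr k' => WithLp.toLp 2 (fun k => if k = k' then -1 else 0 : Fin n → ℝ) with hv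
  set b : EuclideanSpace ℝ (Fin n) := WithLp.toLp 2 (fun k => if k = j then 1 else 0 : Fin n → ℝ) with hb
  rcases cone_alternative v b with ⟨c, hc0, hcb⟩ | ⟨u, hu1, hu2⟩
  · left
    set y : Fin m → ℝ := fun i => c (.inl (.inl i)) - c (.inl (.inr i)) with hy
    have hbk : ∀ k, b k = (∑ i : Fin m, c (.inl (.inl i)) * A i k)
        - (∑ i : Fin m, c (.inl (.inr i)) * A i k) - c (.inr k) := by
      intro k
      have h1 := congrArg (fun w : EuclideanSpace ℝ (Fin n) => w k) hcb
      simp only [WithLp.ofLp_sum, Finset.sum_apply] at h1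
      rw [Fintype.sum_sum_type, Fintype.sum_sum_type] at h1
      have e1 : ∀ i : Fin m, (c (.inl (.inl i)) • v (.inl (.inl i))) k
          = c (.inl (.inl i)) * A i k := fun i => rfl
      have e2 : ∀ i : Fin m, (c (.inl (.inr i)) • v (.inl (.inr i))) k
          = -(c (.inl (.inr i)) * A i k) := fun i => by
        show c (.inl (.inr i)) * (-A i k) = _; ring
      have e3 : ∑ k' : Fin n, (c (.inr k') • v (.inr k')) k = -c (.inr k) := by
        have : ∀ k' : Fin n, (c (.inr k') • v (.inr k')) k
            = if k = k' then -c (.inr k') else 0 := fun k' => by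
          show c (.inr k') * (if k = k' then -1 else 0) = _
          by_cases h : k = k' <;> simp [h]
        rw [Finset.sum_congr rfl (fun k' _ => this k')]
        simp
      rw [Finset.sum_congr rfl (fun i _ => e1 i), Finset.sum_congr rfl (fun i _ => e2 i),
        e3] at h1
      rw [h1]
      rw [Finset.sum_neg_distrib]
      ring
    have hvec : ∀ k, A.vecMul y k = b k + c (.inr k) := by
      intro k
      show ∑ i, y i * A i k = _
      have : ∀ i, y i * A i k
          = c (.inl (.inl i)) * A i k - c (.inl (.inr i)) * A i k := fun i => by
        simp [hy]; ring
      rw [Finset.sum_congr rfl (fun i _ => this i), Finset.sum_sub_distrib, hbk k]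
      ring
    refine ⟨y, fun k => ?_, ?_⟩
    · rw [hvec k]
      have hbk0 : 0 ≤ b k := by
        show (0 : ℝ) ≤ if k = j then 1 else 0
        by_cases h : k = j <;> simp [h]
      have := hc0 (.inr k)
      show (0 : ℝ) ≤ b k + c (.inr k)
      linarith
    · rw [hvec j]
      have hbj : b j = (1 : ℝ) := by
        show (if j = j then (1 : ℝ) else 0) = 1
        simp
      have := hc0 (.inr j)
      show (0 : ℝ) < b j + c (.inr j)
      rw [hbj]; linarith
  · right
    refine ⟨fun k => -u k, fun k => ?_, ?_, ?_⟩
    · have h := hu1 (.inr k)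
      rw [hinner] at h
      have : ∑ k', v (.inr k) k' * u k' = -u k := by
        have : ∀ k', v (.inr k) k' * u k' = if k' = k then -u k' else 0 := fun k' => by
          show (if k' = k then (-1 : ℝ) else 0) * u k' = _
          by_cases hkk : k' = k <;> simp [hkk]
        rw [Finset.sum_congr rfl (fun k' _ => this k')]
        simp
      rw [this] at h
      simpa using h
    · funext i
      have h1 := hu1 (.inl (.inl i))
      have h2 := hu1 (.inl (.inr i))
      rw [hinner] at h1 h2
      have e2 : ∑ k, v (.inl (.inr i)) k * u k = -∑ k, A i k * u k := by
        rw [← Finset.sum_neg_distrib]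
        exact Finset.sum_congr rfl fun k _ => by show -A i k * u k = _; ring
      rw [e2] at h2
      have h1' : ∑ k, A i k * u k = 0 := le_antisymm (by linarith) h1
      show ∑ k, A i k * (-u k) = 0
      have e3 : ∀ k, A i k * (-u k) = -(A i k * u k) := fun k => by ring
      rw [Finset.sum_congr rfl fun k _ => e3 k, Finset.sum_neg_distrib, h1', neg_zero]
    · have := hu2
      rw [hinner] at this
      have e : ∑ k, u k * b k = u j := by
        have : ∀ k, u k * b k = if k = j then u k else 0 := fun k => by
          show u k * (if k = j then 1 else 0) = _
          by_cases h : k = j <;> simp [h]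
        rw [Finset.sum_congr rfl (fun k _ => this k)]
        simp
      rw [e] at this
      show (0 : ℝ) < -u j
      linarith

theorem tucker_theorem (m n : ℕ) (A : Matrix (Fin m) (Fin n) ℝ) :
    ∃ (y : Fin m → ℝ) (x : Fin n → ℝ),
      0 ≤ A.vecMul y ∧ 0 ≤ x ∧ A.mulVec x = 0 ∧ ∀ j, 0 < x j + A.vecMul y j := by
  have key : ∀ j : Fin n, ∃ (y : Fin m → ℝ) (x : Fin n → ℝ),
      0 ≤ A.vecMul y ∧ 0 ≤ x ∧ A.mulVec x = 0 ∧ 0 < x j + A.vecMul y j := by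
    intro j
    rcases tucker_col m n A j with ⟨y, hy1, hy2⟩ | ⟨x, hx1, hx2, hx3⟩
    · exact ⟨y, 0, hy1, le_refl 0, Matrix.mulVec_zero A, by simpa using hy2⟩
    · refine ⟨0, x, ?_, hx1, hx2, ?_⟩
      · rw [Matrix.zero_vecMul]
      · rw [Matrix.zero_vecMul]
        simpa using hx3
  choose Y X h1 h2 h3 h4 using key
  have hvsum : A.vecMul (∑ j, Y j) = ∑ j, A.vecMul (Y j) := by
    show A.vecMulLinear (∑ j, Y j) = _
    rw [map_sum]
    exact Finset.sum_congr rfl fun j _ => Matrix.vecMulLinear_apply A (Y j)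
  have hmsum : A.mulVec (∑ j, X j) = ∑ j, A.mulVec (X j) := by
    show A.mulVecLin (∑ j, X j) = _
    rw [map_sum]
    exact Finset.sum_congr rfl fun j _ => Matrix.mulVecLin_apply A (X j)
  refine ⟨∑ j, Y j, ∑ j, X j, ?_, ?_, ?_, ?_⟩
  · rw [hvsum]
    exact Finset.sum_nonneg fun j _ => h1 j
  · exact Finset.sum_nonneg fun j _ => h2 j
  · rw [hmsum]
    exact Finset.sum_eq_zero fun j _ => h3 j
  · intro j
    have hx : X j j ≤ (∑ j', X j') j := by
      rw [Finset.sum_apply]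
      exact Finset.single_le_sum (fun j' _ => by simpa using Pi.le_def.mp (h2 j') j)
        (Finset.mem_univ j)
    have hy : A.vecMul (Y j) j ≤ A.vecMul (∑ j', Y j') j := by
      rw [hvsum, Finset.sum_apply]
      exact Finset.single_le_sum (fun j' _ => by simpa using Pi.le_def.mp (h1 j') j)
        (Finset.mem_univ j)
    linarith [h4 j]
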